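/- If two MDPs μ, μ' on the same finite state space share a policy π inducing transition matrices P, P' with ‖P − P'‖_∞ ≤ ε and reward vectors ρ, ρ' with ‖ρ − ρ'‖_∞ ≤ ε, and both rewards are bounded by 1 in sup norm, then ‖(I−γP)^{-1}ρ − (I−γP')^{-1}ρ'‖_∞ ≤ ε/(1−γ) + γε/(1−γ)² ≤ 2ε/(1−γ)². -/

import Mathlib

open Matrix

attribute [local instance] Matrix.linftyOpNormedRing Matrix.linftyOpNormedAlgebra

lemma stmt14_norm_le_one {n : ℕ} (P : Matrix (Fin n) (Fin n) ℝ)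
    (hpos : ∀ i j, 0 ≤ P i j) (hrow : ∀ i, ∑ j, P i j = 1) : ‖P‖ ≤ 1 := by
  rw [Matrix.linfty_opNorm_def]
  have h : ∀ i, (∑ j, ‖P i j‖₊ : NNReal) ≤ 1 := by
    intro i
    apply le_of_eq
    apply NNReal.coe_injective
    push_cast
    simp only [coe_nnnorm, Real.norm_eq_abs]
    rw [← hrow i]
    exact Finset.sum_congr rfl fun j _ => abs_of_nonneg (hpos i j)
  exact_mod_cast Finset.sup_le fun i _ => h i

lemma stmt14_inv_norm {n : ℕ} [NeZero n] (x : Matrix (Fin n) (Fin n) ℝ)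
    (h : ‖x‖ < 1) : ‖Ring.inverse (1 - x)‖ ≤ (1 - ‖x‖)⁻¹ := by
  rw [← (hasSum_geom_series_inverse x h).tsum_eq]
  have hs : Summable (fun i : ℕ => ‖x‖ ^ i) :=
    summable_geometric_of_lt_one (norm_nonneg _) h
  have hs' : Summable (fun i : ℕ => ‖x ^ i‖) :=
    Summable.of_nonneg_of_le (fun i => norm_nonneg _) (fun i => norm_pow_le x i) hs
  calc ‖∑' i : ℕ, x ^ i‖ ≤ ∑' i : ℕ, ‖x ^ i‖ := norm_tsum_le_tsum_norm hs'
    _ ≤ ∑' i : ℕ, ‖x‖ ^ i := Summable.tsum_le_tsum (fun i => norm_pow_le x i) hs' hs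
    _ = (1 - ‖x‖)⁻¹ := tsum_geometric_of_lt_one (norm_nonneg _) h

/-- If two MDPs share a policy inducing row-stochastic matrices `P, P'` with
`‖P − P'‖_∞ ≤ ε`, reward vectors `ρ, ρ'` with `‖ρ − ρ'‖_∞ ≤ ε` and both bounded by 1 in sup
norm, then `‖(I−γP)⁻¹ρ − (I−γP')⁻¹ρ'‖_∞ ≤ ε/(1−γ) + γε/(1−γ)² ≤ 2ε/(1−γ)²`. -/
theorem stmt14 (n : ℕ) (P P' : Matrix (Fin n) (Fin n) ℝ)
    (hpos : ∀ i j, 0 ≤ P i j) (hrow : ∀ i, ∑ j, P i j = 1)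
    (hpos' : ∀ i j, 0 ≤ P' i j) (hrow' : ∀ i, ∑ j, P' i j = 1)
    (γ : ℝ) (hγ0 : 0 ≤ γ) (hγ1 : γ < 1)
    (ρ ρ' : Fin n → ℝ) (hρ : ‖ρ‖ ≤ 1) (hρ' : ‖ρ'‖ ≤ 1)
    (ε : ℝ) (hε : 0 ≤ ε) (hPP : ‖P - P'‖ ≤ ε) (hρρ : ‖ρ - ρ'‖ ≤ ε) :
    ‖(1 - γ • P)⁻¹ *ᵥ ρ - (1 - γ • P')⁻¹ *ᵥ ρ'‖ ≤ ε / (1 - γ) + γ * ε / (1 - γ) ^ 2 ∧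
      ε / (1 - γ) + γ * ε / (1 - γ) ^ 2 ≤ 2 * ε / (1 - γ) ^ 2 := by
  have h1γ : (0:ℝ) < 1 - γ := by linarith
  constructor
  · rcases Nat.eq_zero_or_pos n with hn | hn
    · subst hn
      have hz : ‖(1 - γ • P)⁻¹ *ᵥ ρ - (1 - γ • P')⁻¹ *ᵥ ρ'‖ = 0 := by
        have : ((1 - γ • P)⁻¹ *ᵥ ρ - (1 - γ • P')⁻¹ *ᵥ ρ') = 0 := Subsingleton.elim _ _
        simp [this]
      rw [hz]; positivity
    haveI : NeZero n := ⟨hn.ne'⟩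
    set A : Matrix (Fin n) (Fin n) ℝ := 1 - γ • P with hAdef
    set B : Matrix (Fin n) (Fin n) ℝ := 1 - γ • P' with hBdef
    have hnP : ‖γ • P‖ ≤ γ := by
      rw [norm_smul, Real.norm_eq_abs, abs_of_nonneg hγ0]
      calc γ * ‖P‖ ≤ γ * 1 := by
            exact mul_le_mul_of_nonneg_left (stmt14_norm_le_one P hpos hrow) hγ0
        _ = γ := mul_one γ
    have hnP' : ‖γ • P'‖ ≤ γ := by
      rw [norm_smul, Real.norm_eq_abs, abs_of_nonneg hγ0]
      calc γ * ‖P'‖ ≤ γ * 1 := by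
            exact mul_le_mul_of_nonneg_left (stmt14_norm_le_one P' hpos' hrow') hγ0
        _ = γ := mul_one γ
    have hAlt : ‖γ • P‖ < 1 := lt_of_le_of_lt hnP hγ1
    have hBlt : ‖γ • P'‖ < 1 := lt_of_le_of_lt hnP' hγ1
    have hinvA : ‖A⁻¹‖ ≤ (1 - γ)⁻¹ := by
      rw [hAdef, Matrix.nonsing_inv_eq_ringInverse]
      refine (stmt14_inv_norm _ hAlt).trans ?_
      exact inv_anti₀ h1γ (by linarith)
    have hinvB : ‖B⁻¹‖ ≤ (1 - γ)⁻¹ := by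
      rw [hBdef, Matrix.nonsing_inv_eq_ringInverse]
      refine (stmt14_inv_norm _ hBlt).trans ?_
      exact inv_anti₀ h1γ (by linarith)
    have huA : IsUnit A := isUnit_one_sub_of_norm_lt_one hAlt
    have huB : IsUnit B := isUnit_one_sub_of_norm_lt_one hBlt
    have hdA : IsUnit A.det := (Matrix.isUnit_iff_isUnit_det A).mp huA
    have hdB : IsUnit B.det := (Matrix.isUnit_iff_isUnit_det B).mp huB
    have hA1 : A⁻¹ * A = 1 := Matrix.nonsing_inv_mul A hdA
    have hB1 : B * B⁻¹ = 1 := Matrix.mul_nonsing_inv B hdB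
    have hdiff : A⁻¹ * (γ • (P - P')) * B⁻¹ = A⁻¹ - B⁻¹ := by
      have hBA : γ • (P - P') = B - A := by
        rw [hAdef, hBdef, smul_sub]
        abel
      rw [hBA, mul_sub, sub_mul, mul_assoc, hB1, mul_one, hA1, one_mul]
    have hsplit : A⁻¹ *ᵥ ρ - B⁻¹ *ᵥ ρ' =
        A⁻¹ *ᵥ (ρ - ρ') + (A⁻¹ * (γ • (P - P')) * B⁻¹) *ᵥ ρ' := by
      rw [hdiff, Matrix.mulVec_sub, Matrix.sub_mulVec]
      abel
    have hsm : ‖γ • (P - P')‖ ≤ γ * ε := by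
      rw [norm_smul, Real.norm_eq_abs, abs_of_nonneg hγ0]
      exact mul_le_mul_of_nonneg_left hPP hγ0
    have t1 : ‖A⁻¹ *ᵥ (ρ - ρ')‖ ≤ (1 - γ)⁻¹ * ε :=
      (Matrix.linfty_opNorm_mulVec _ _).trans
        (mul_le_mul hinvA hρρ (norm_nonneg _) (by positivity))
    have t2 : ‖(A⁻¹ * (γ • (P - P')) * B⁻¹) *ᵥ ρ'‖ ≤ (1 - γ)⁻¹ * (γ * ε) * (1 - γ)⁻¹ := by
      refine (Matrix.linfty_opNorm_mulVec _ _).trans ?_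
      have h2 : ‖A⁻¹ * (γ • (P - P'))‖ ≤ (1 - γ)⁻¹ * (γ * ε) :=
        (Matrix.linfty_opNorm_mul _ _).trans
          (mul_le_mul hinvA hsm (norm_nonneg _) (by positivity))
      have hm : ‖A⁻¹ * (γ • (P - P')) * B⁻¹‖ ≤ (1 - γ)⁻¹ * (γ * ε) * (1 - γ)⁻¹ :=
        (Matrix.linfty_opNorm_mul _ _).trans
          (mul_le_mul h2 hinvB (norm_nonneg _) (by positivity))
      calc ‖A⁻¹ * (γ • (P - P')) * B⁻¹‖ * ‖ρ'‖
          ≤ (1 - γ)⁻¹ * (γ * ε) * (1 - γ)⁻¹ * 1 :=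
            mul_le_mul hm hρ' (norm_nonneg _) (by positivity)
        _ = (1 - γ)⁻¹ * (γ * ε) * (1 - γ)⁻¹ := mul_one _
    calc ‖A⁻¹ *ᵥ ρ - B⁻¹ *ᵥ ρ'‖
        = ‖A⁻¹ *ᵥ (ρ - ρ') + (A⁻¹ * (γ • (P - P')) * B⁻¹) *ᵥ ρ'‖ := by rw [hsplit]
      _ ≤ ‖A⁻¹ *ᵥ (ρ - ρ')‖ + ‖(A⁻¹ * (γ • (P - P')) * B⁻¹) *ᵥ ρ'‖ := norm_add_le _ _
      _ ≤ (1 - γ)⁻¹ * ε + (1 - γ)⁻¹ * (γ * ε) * (1 - γ)⁻¹ := add_le_add t1 t2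
      _ = ε / (1 - γ) + γ * ε / (1 - γ) ^ 2 := by field_simp
  · have key : ε / (1 - γ) + γ * ε / (1 - γ) ^ 2 = (ε * (1 - γ) + γ * ε) / (1 - γ) ^ 2 := by
      field_simp
    rw [key]
    apply div_le_div_of_nonneg_right ?_ (by positivity)
    nlinarith
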